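/- There exists a universal constant c > 0 such that for every integer n ≥ 2 and every p ∈ [2, ∞), γ_{(p)}(A_prefix) ≥ c · n^{1/p} · ln(n), where A_prefix ∈ ℝ^{n×n} is the lower-triangular all-ones matrix. -/

import Mathlib

open MeasureTheory Matrix
open scoped ENNReal

noncomputable section

namespace DPPaper

variable {ι κ : Type*}

/-- Two inputs `x, x' : ι → ℝ` are neighboring if `‖x - x'‖₁ ≤ 1`. -/
def Neighboring [Fintype ι] (x x' : ι → ℝ) : Prop :=
  ∑ i, |x i - x' i| ≤ 1

/-- A mechanism `M` (a map from inputs to probability measures on an output space `Ω`)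
is `(ε,δ)`-differentially private if for all neighboring inputs and all measurable sets `S`,
`M x S ≤ e^ε · M x' S + δ`. -/
def IsDP [Fintype ι] {Ω : Type*} [MeasurableSpace Ω]
    (M : (ι → ℝ) → Measure Ω) (ε δ : ℝ) : Prop :=
  ∀ x x' : ι → ℝ, Neighboring x x' → ∀ S : Set Ω, MeasurableSet S →
    M x S ≤ ENNReal.ofReal (Real.exp ε) * M x' S + ENNReal.ofReal δ

/-- The `ℓ_p^p`-error of a mechanism `M` on the query matrix `A`:
`sup_x (E_{Y ~ M x} [ ‖Y - A x‖_p^p ])^{1/p}`, valued in `ℝ≥0∞`. -/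
def errLp [Fintype ι] [Fintype κ] (M : (ι → ℝ) → Measure (κ → ℝ))
    (A : Matrix κ ι ℝ) (p : ℝ) : ℝ≥0∞ :=
  ⨆ x : ι → ℝ,
    (∫⁻ y, ENNReal.ofReal (∑ i, |y i - A.mulVec x i| ^ p) ∂(M x)) ^ (1 / p)

/-- The `q`-trace of a square matrix: `(∑ i, U i i ^ q)^{1/q}`. -/
def trq [Fintype κ] (q : ℝ) (U : Matrix κ κ ℝ) : ℝ :=
  (∑ i, (U i i) ^ q) ^ (1 / q)

/-- The `1 → 2` operator norm of a matrix: the largest `ℓ₂`-norm of a column. -/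
def norm12 [Fintype ι] [Fintype κ] (R : Matrix κ ι ℝ) : ℝ :=
  ⨆ j : ι, Real.sqrt (∑ i, (R i j) ^ 2)

/-- The factorization norm `γ_{(p)}(A)`. -/
def gammaP [Fintype ι] [Fintype κ] (p : ℝ) (A : Matrix κ ι ℝ) : ℝ :=
  sInf { c : ℝ | ∃ (k : ℕ) (L : Matrix κ (Fin k) ℝ) (R : Matrix (Fin k) ι ℝ),
    L * R = A ∧ c = Real.sqrt (trq (p / 2) (L * Lᵀ)) * norm12 R }

/-- The old Mathlib `Matrix.PosSemidef.sqrt` (removed since), spelled out with its old definition. -/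
def psdSqrt [Fintype ι] [DecidableEq ι] {A : Matrix ι ι ℝ} (hA : A.PosSemidef) : Matrix ι ι ℝ :=
  hA.1.eigenvectorUnitary.1 * diagonal ((↑) ∘ (√·) ∘ hA.1.eigenvalues) *
    (star hA.1.eigenvectorUnitary : Matrix ι ι ℝ)

/-- The Schatten-1 norm of a matrix: the trace of the PSD square root of `Aᵀ * A`,
i.e. the sum of the singular values of `A`. -/
def schatten1 [Fintype ι] [Fintype κ] [DecidableEq ι] (A : Matrix κ ι ℝ) : ℝ :=
  (psdSqrt (Matrix.posSemidef_conjTranspose_mul_self A)).trace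

/-- The sensitivity polytope `A B₁^n = {A x : ‖x‖₁ ≤ 1}`. -/
def sensPolytope [Fintype ι] (A : Matrix κ ι ℝ) : Set (κ → ℝ) :=
  {v | ∃ x : ι → ℝ, (∑ i, |x i|) ≤ 1 ∧ v = A.mulVec x}

/-- The width of a set `K` in direction `θ`. -/
def width [Fintype κ] (K : Set (κ → ℝ)) (θ : κ → ℝ) : ℝ :=
  sSup ((fun v => ∑ i, θ i * v i) '' K) - sInf ((fun v => ∑ i, θ i * v i) '' K)

/-- `κ(A)`: the minimal width of the sensitivity polytope over all unit directions. -/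
def kappa [Fintype ι] [Fintype κ] (A : Matrix κ ι ℝ) : ℝ :=
  sInf { c : ℝ | ∃ θ : κ → ℝ, (∑ i, (θ i) ^ 2) = 1 ∧ c = width (sensPolytope A) θ }

/-- The prefix-sum (continual counting) matrix: lower-triangular all ones. -/
def Aprefix (n : ℕ) : Matrix (Fin n) (Fin n) ℝ :=
  fun i j => if j ≤ i then 1 else 0

/-- The covariance matrix of a measure on `κ → ℝ`. -/
def covMatrix [Fintype κ] (μ : Measure (κ → ℝ)) : Matrix κ κ ℝ :=
  fun i j => ∫ y, (y i - ∫ y', y' i ∂μ) * (y j - ∫ y', y' j ∂μ) ∂μ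

/-- The parity query matrix `Q_{d,w}`: rows indexed by `w`-element subsets `P` of `{1,…,d}`,
columns indexed by points of `{-1,1}^d` (encoded as `Fin d → Bool`), entry `∏_{i ∈ P} x_i`. -/
def parityMatrix (d w : ℕ) : Matrix {P : Finset (Fin d) // P.card = w} (Fin d → Bool) ℝ :=
  fun P b => ∏ i ∈ P.1, (if b i then (1 : ℝ) else -1)

/-- The Hadamard matrices: `H_0 = [1]`, `H_{d+1} = [[H_d, H_d], [H_d, -H_d]]`. -/
def Hadamard : (d : ℕ) → Matrix (Fin (2 ^ d)) (Fin (2 ^ d)) ℝ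
  | 0 => fun _ _ => 1
  | (d + 1) =>
    Matrix.reindex
      (finSumFinEquiv.trans (finCongr (by rw [pow_succ, mul_two])))
      (finSumFinEquiv.trans (finCongr (by rw [pow_succ, mul_two])))
      (Matrix.fromBlocks (Hadamard d) (Hadamard d) (Hadamard d) (-(Hadamard d)))

end DPPaper

open DPPaper

namespace PrefixLB
open Finset Real

noncomputable def thet (N t : ℕ) : ℝ := 2 * π * t / N

noncomputable def kerf (N : ℕ) (x : ℝ) : ℝ :=
  (N : ℝ)⁻¹ * ∑ t ∈ Finset.range N, (π - thet N t) * Real.sin (x * thet N t)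

section TrigSums

lemma z_ne_one {N m : ℕ} (h1 : 0 < m) (h2 : m < N) :
    Complex.exp ((2 * π * m / N : ℝ) * Complex.I) ≠ 1 := by
  have hN : (0:ℝ) < N := by exact_mod_cast h1.trans h2
  rw [Ne, Complex.exp_eq_one_iff]
  rintro ⟨k, hk⟩
  have hI : ((2 * π * m / N : ℝ) : ℂ) = (k : ℂ) * (2 * π) := by
    have h' : ((2 * π * m / N : ℝ) : ℂ) * Complex.I = ((k : ℂ) * (2 * π)) * Complex.I := by
      rw [hk]; ring
    exact mul_right_cancel₀ Complex.I_ne_zero h'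
  have hr : (2 * π * m / N : ℝ) = (k : ℝ) * (2 * π) := by exact_mod_cast hI
  have hπ : (0:ℝ) < π := Real.pi_pos
  have hmN : (m : ℝ) = k * N := by
    field_simp at hr
    nlinarith [hr]
  have h0 : (0:ℝ) < (m:ℝ) := by exact_mod_cast h1
  have h3 : (m:ℝ) < N := by exact_mod_cast h2
  rcases le_or_gt k 0 with hk0 | hk0
  · have : (k:ℝ) * N ≤ 0 := mul_nonpos_of_nonpos_of_nonneg (by exact_mod_cast hk0) hN.le
    linarith
  · have : (1:ℝ) ≤ (k:ℝ) := by exact_mod_cast hk0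
    nlinarith

lemma z_pow_N {N m : ℕ} (hN : 0 < N) :
    (Complex.exp ((2 * π * m / N : ℝ) * Complex.I)) ^ N = 1 := by
  rw [← Complex.exp_nat_mul]
  have hN' : (0:ℝ) < N := by exact_mod_cast hN
  have : (N : ℂ) * (((2 * π * m / N : ℝ) : ℂ) * Complex.I) = (m : ℂ) * (2 * ↑π * Complex.I) := by
    have hN0 : (N:ℂ) ≠ 0 := by exact_mod_cast hN'.ne'
    push_cast
    field_simp
  rw [this]
  exact_mod_cast Complex.exp_int_mul_two_pi_mul_I m

lemma z_pow_t {N m : ℕ} (t : ℕ) :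
    (Complex.exp ((2 * π * m / N : ℝ) * Complex.I)) ^ t
      = Complex.exp ((2 * π * m * t / N : ℝ) * Complex.I) := by
  rw [← Complex.exp_nat_mul]
  congr 1
  push_cast
  ring

lemma sum_exp_eq_zero {N m : ℕ} (h1 : 0 < m) (h2 : m < N) :
    ∑ t ∈ Finset.range N, Complex.exp ((2 * π * m * t / N : ℝ) * Complex.I) = 0 := by
  have hzt := fun t => (z_pow_t (N := N) (m := m) t).symm
  simp only [hzt]
  rw [geom_sum_eq (z_ne_one h1 h2), z_pow_N (h1.trans h2)]
  simp

lemma sum_cos_eq_zero {N m : ℕ} (h1 : 0 < m) (h2 : m < N) :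
    ∑ t ∈ Finset.range N, Real.cos (2 * π * m * t / N) = 0 := by
  have := congrArg Complex.re (sum_exp_eq_zero h1 h2)
  rw [Complex.re_sum] at this
  simp only [Complex.exp_ofReal_mul_I_re] at this
  exact this

lemma sum_sin_eq_zero {N m : ℕ} (h1 : 0 < m) (h2 : m < N) :
    ∑ t ∈ Finset.range N, Real.sin (2 * π * m * t / N) = 0 := by
  have := congrArg Complex.im (sum_exp_eq_zero h1 h2)
  rw [Complex.im_sum] at this
  simp only [Complex.exp_ofReal_mul_I_im] at this
  exact this

lemma sum_t_exp {N : ℕ} {z : ℂ} (hz1 : z ≠ 1) (hzN : z ^ N = 1) :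
    (∑ t ∈ Finset.range N, (t : ℂ) * z ^ t) * (z - 1) = N := by
  have hg : ∑ t ∈ Finset.range N, z ^ t = 0 := by
    rw [geom_sum_eq hz1, hzN]; simp
  have key : ∀ t : ℕ, (t:ℂ) * z ^ t * (z - 1)
      = ((((t+1):ℕ):ℂ) * z ^ (t+1) - (t:ℂ) * z ^ t) - z * z ^ t := by
    intro t; push_cast; rw [pow_succ]; ring
  rw [Finset.sum_mul]
  calc ∑ t ∈ Finset.range N, (t:ℂ) * z ^ t * (z - 1)
      = ∑ t ∈ Finset.range N, (((((t+1):ℕ):ℂ) * z ^ (t+1) - (t:ℂ) * z ^ t) - z * z ^ t) := by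
        exact Finset.sum_congr rfl fun t _ => key t
    _ = (∑ t ∈ Finset.range N, ((((t+1):ℕ):ℂ) * z ^ (t+1) - (t:ℂ) * z ^ t))
        - z * ∑ t ∈ Finset.range N, z ^ t := by
        rw [Finset.sum_sub_distrib, Finset.mul_sum]
    _ = N := by
        rw [Finset.sum_range_sub (fun t => (t:ℂ) * z ^ t), hg, hzN]
        push_cast
        ring

lemma sum_t_sin {N m : ℕ} (h1 : 0 < m) (h2 : m < N) :
    ∑ t ∈ Finset.range N, (t:ℝ) * Real.sin (2 * π * m * t / N)
      = -(N:ℝ) * Real.sin (2 * π * m / N) / (2 - 2 * Real.cos (2 * π * m / N)) := by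
  set z : ℂ := Complex.exp ((2 * π * m / N : ℝ) * Complex.I) with hz
  have hz1 : z ≠ 1 := z_ne_one h1 h2
  have hzN : z ^ N = 1 := z_pow_N (h1.trans h2)
  have hmain := sum_t_exp hz1 hzN
  have hzt : ∀ t : ℕ, z ^ t = Complex.exp ((2 * π * m * t / N : ℝ) * Complex.I) :=
    fun t => z_pow_t t
  have hS : (∑ t ∈ Finset.range N, (t : ℂ) * z ^ t) = (N : ℂ) / (z - 1) :=
    (eq_div_iff (sub_ne_zero.2 hz1)).mpr hmain
  have him := congrArg Complex.im hS
  rw [Complex.im_sum] at him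
  have hterm : ∀ t : ℕ, ((t : ℂ) * z ^ t).im = (t:ℝ) * Real.sin (2 * π * m * t / N) := by
    intro t
    rw [hzt t, Complex.mul_im]
    simp only [Complex.exp_ofReal_mul_I_im, Complex.exp_ofReal_mul_I_re,
      Complex.natCast_re, Complex.natCast_im]
    ring
  simp only [hterm] at him
  rw [him]
  have hre : (z - 1).re = Real.cos (2 * π * m / N) - 1 := by
    rw [Complex.sub_re, hz]
    simp only [Complex.exp_ofReal_mul_I_re, Complex.one_re]
  have him2 : (z - 1).im = Real.sin (2 * π * m / N) := by
    rw [Complex.sub_im, hz]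
    simp only [Complex.exp_ofReal_mul_I_im, Complex.one_im]
    ring
  have hns : Complex.normSq (z - 1) = 2 - 2 * Real.cos (2 * π * m / N) := by
    rw [Complex.normSq_apply, hre, him2]
    nlinarith [Real.sin_sq_add_cos_sq (2 * π * m / N)]
  rw [Complex.div_im, hns, hre, him2]
  simp
  ring

end TrigSums


lemma kerf_zero {N : ℕ} : kerf N 0 = 0 := by
  simp [kerf]

lemma kerf_nat {N m : ℕ} (h1 : 0 < m) (h2 : 2 * m < N) :
    kerf N m = (π / N) * (Real.cos (π * m / N) / Real.sin (π * m / N)) := by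
  have hN : 0 < N := by omega
  have hN' : (0:ℝ) < N := by exact_mod_cast hN
  have hmN : m < N := by omega
  set x : ℝ := π * m / N with hxdef
  have hx0 : 0 < x := by
    have : (0:ℝ) < m := by exact_mod_cast h1
    positivity
  have hx2 : x < π / 2 := by
    rw [hxdef, div_lt_div_iff₀ hN' two_pos]
    have : (2 * m : ℝ) < N := by exact_mod_cast h2
    nlinarith [Real.pi_pos]
  have hsx : 0 < Real.sin x := Real.sin_pos_of_pos_of_lt_pi hx0 (by linarith [Real.pi_pos])
  have hphi : 2 * π * m / N = 2 * x := by rw [hxdef]; ring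
  -- expand kerf
  have hexp : kerf N m = (N:ℝ)⁻¹ * (π * ∑ t ∈ Finset.range N, Real.sin (2 * π * m * t / N)
      - (2 * π / N) * ∑ t ∈ Finset.range N, (t:ℝ) * Real.sin (2 * π * m * t / N)) := by
    rw [kerf]
    congr 1
    rw [Finset.mul_sum, Finset.mul_sum, ← Finset.sum_sub_distrib]
    apply Finset.sum_congr rfl
    intro t _
    have harg : (m:ℝ) * thet N t = 2 * π * m * t / N := by
      rw [thet]; ring
    rw [harg, thet]
    ring
  rw [hexp, sum_sin_eq_zero h1 hmN, sum_t_sin h1 hmN]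
  have hsin2 : Real.sin (2 * π * m / N) = 2 * Real.sin x * Real.cos x := by
    rw [hphi, Real.sin_two_mul]
  have hcos2 : 2 - 2 * Real.cos (2 * π * m / N) = 4 * Real.sin x ^ 2 := by
    rw [hphi, Real.cos_two_mul']
    nlinarith [Real.sin_sq_add_cos_sq x]
  rw [hsin2, hcos2]
  field_simp
  ring

lemma cot_aux {x : ℝ} (h0 : 0 < x) (h2 : x < π / 2) :
    (1 - x^2) * Real.sin x ≤ x * Real.cos x := by
  have hsin : 0 < Real.sin x := Real.sin_pos_of_pos_of_lt_pi h0 (by linarith [Real.pi_pos])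
  rcases le_or_gt x 1 with h | h
  · have hs := Real.sin_le h0.le
    have hc := Real.one_sub_sq_div_two_le_cos (x := x)
    have h1x : (0:ℝ) ≤ 1 - x^2 := by nlinarith
    calc (1 - x^2) * Real.sin x ≤ (1 - x^2) * x := mul_le_mul_of_nonneg_left hs h1x
      _ ≤ x * Real.cos x := by nlinarith [mul_le_mul_of_nonneg_left hc h0.le]
  · have hcos : 0 ≤ Real.cos x := Real.cos_nonneg_of_mem_Icc ⟨by linarith [Real.pi_pos], h2.le⟩
    have hneg : (0:ℝ) < x^2 - 1 := by nlinarith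
    nlinarith [mul_nonneg h0.le hcos, mul_pos hneg hsin]

lemma kerf_ge {N m : ℕ} (h1 : 0 < m) (h2 : 2 * m < N) :
    1 / (m:ℝ) - π^2 * m / N^2 ≤ kerf N m := by
  have hN : 0 < N := by omega
  have hN' : (0:ℝ) < N := by exact_mod_cast hN
  have hm' : (0:ℝ) < m := by exact_mod_cast h1
  rw [kerf_nat h1 h2]
  set x : ℝ := π * m / N with hxdef
  have hx0 : 0 < x := by positivity
  have hx2 : x < π / 2 := by
    rw [hxdef, div_lt_div_iff₀ hN' two_pos]
    have : (2 * m : ℝ) < N := by exact_mod_cast h2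
    nlinarith [Real.pi_pos]
  have hsx : 0 < Real.sin x := Real.sin_pos_of_pos_of_lt_pi hx0 (by linarith [Real.pi_pos])
  have hcot : 1 / x - x ≤ Real.cos x / Real.sin x := by
    rw [div_sub' hx0.ne', div_le_div_iff₀ hx0 hsx]
    calc (1 - x * x) * Real.sin x = (1 - x^2) * Real.sin x := by ring
      _ ≤ x * Real.cos x := cot_aux hx0 hx2
      _ = Real.cos x * x := by ring
  have hπ : (0:ℝ) < π := Real.pi_pos
  have key : (π / N) * (1 / x - x) = 1 / (m:ℝ) - π^2 * m / N^2 := by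
    rw [hxdef]
    field_simp
  rw [← key]
  apply mul_le_mul_of_nonneg_left hcot (by positivity)


lemma sum_cos_nat {N m : ℕ} (h1 : 0 < m) (h2 : m < N) :
    ∑ t ∈ Finset.range N, Real.cos ((m:ℝ) * thet N t) = 0 := by
  have : ∀ t, (m:ℝ) * thet N t = 2 * π * m * t / N := by
    intro t; rw [thet]; ring
  simp only [this]
  exact sum_cos_eq_zero h1 h2


lemma sum_cos_diff' {n N : ℕ} (hnN : n ≤ N) (i j : Fin n) :
    ∑ t ∈ Finset.range N, Real.cos ((((i:ℕ):ℝ) - ((j:ℕ):ℝ)) * thet N t)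
      = if i = j then (N:ℝ) else 0 := by
  rcases eq_or_ne i j with rfl | hij
  · simp [thet]
  · rw [if_neg hij]
    rcases lt_or_gt_of_ne (fun h => hij (Fin.ext h) : (i:ℕ) ≠ (j:ℕ)) with h | h
    · -- i < j
      have key := sum_cos_nat (N := N) (m := (j:ℕ) - (i:ℕ)) (by omega) (by omega)
      have harg : ∀ t, ((((j:ℕ) - (i:ℕ) : ℕ)):ℝ) * thet N t
          = -((((i:ℕ):ℝ) - ((j:ℕ):ℝ)) * thet N t) := by
        intro t
        have : ((((j:ℕ) - (i:ℕ) : ℕ)):ℝ) = ((j:ℕ):ℝ) - ((i:ℕ):ℝ) := by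
          push_cast [Nat.cast_sub h.le]
          ring
        rw [this]; ring
      calc ∑ t ∈ Finset.range N, Real.cos ((((i:ℕ):ℝ) - ((j:ℕ):ℝ)) * thet N t)
          = ∑ t ∈ Finset.range N, Real.cos (((((j:ℕ) - (i:ℕ) : ℕ)):ℝ) * thet N t) := by
            apply Finset.sum_congr rfl; intro t _; rw [harg t, Real.cos_neg]
        _ = 0 := key
    · have key := sum_cos_nat (N := N) (m := (i:ℕ) - (j:ℕ)) (by omega) (by omega)
      have harg : ∀ t, ((((i:ℕ) - (j:ℕ) : ℕ)):ℝ) * thet N t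
          = (((i:ℕ):ℝ) - ((j:ℕ):ℝ)) * thet N t := by
        intro t
        have : ((((i:ℕ) - (j:ℕ) : ℕ)):ℝ) = ((i:ℕ):ℝ) - ((j:ℕ):ℝ) := by
          push_cast [Nat.cast_sub h.le]
          ring
        rw [this]
      calc ∑ t ∈ Finset.range N, Real.cos ((((i:ℕ):ℝ) - ((j:ℕ):ℝ)) * thet N t)
          = ∑ t ∈ Finset.range N, Real.cos (((((i:ℕ) - (j:ℕ) : ℕ)):ℝ) * thet N t) := by
            apply Finset.sum_congr rfl; intro t _; rw [harg t]
        _ = 0 := key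


lemma parseval {n N : ℕ} (h : n ≤ N) (u : Fin n → ℝ) :
    ∑ t ∈ Finset.range N,
      ((∑ i, u i * Real.sin (((i:ℕ):ℝ) * thet N t))^2
        + (∑ i, u i * Real.cos (((i:ℕ):ℝ) * thet N t))^2)
      = N * ∑ i, (u i)^2 := by
  have expand : ∀ t, (∑ i, u i * Real.sin (((i:ℕ):ℝ) * thet N t))^2
      + (∑ i, u i * Real.cos (((i:ℕ):ℝ) * thet N t))^2
      = ∑ i, ∑ j, (u i * u j) * Real.cos ((((i:ℕ):ℝ) - ((j:ℕ):ℝ)) * thet N t) := by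
    intro t
    rw [sq, sq, Finset.sum_mul_sum, Finset.sum_mul_sum, ← Finset.sum_add_distrib]
    apply Finset.sum_congr rfl
    intro i _
    rw [← Finset.sum_add_distrib]
    apply Finset.sum_congr rfl
    intro j _
    have harg : (((i:ℕ):ℝ) - ((j:ℕ):ℝ)) * thet N t
        = ((i:ℕ):ℝ) * thet N t - ((j:ℕ):ℝ) * thet N t := by ring
    rw [harg, Real.cos_sub]
    ring
  calc ∑ t ∈ Finset.range N, ((∑ i, u i * Real.sin (((i:ℕ):ℝ) * thet N t))^2
        + (∑ i, u i * Real.cos (((i:ℕ):ℝ) * thet N t))^2)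
      = ∑ t ∈ Finset.range N, ∑ i, ∑ j,
          (u i * u j) * Real.cos ((((i:ℕ):ℝ) - ((j:ℕ):ℝ)) * thet N t) := by
        exact Finset.sum_congr rfl fun t _ => expand t
    _ = ∑ i, ∑ j, ∑ t ∈ Finset.range N,
          (u i * u j) * Real.cos ((((i:ℕ):ℝ) - ((j:ℕ):ℝ)) * thet N t) := by
        rw [Finset.sum_comm]
        exact Finset.sum_congr rfl fun i _ => Finset.sum_comm
    _ = ∑ i, ∑ j, (u i * u j) * (if i = j then (N:ℝ) else 0) := by
        apply Finset.sum_congr rfl; intro i _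
        apply Finset.sum_congr rfl; intro j _
        rw [← Finset.mul_sum, sum_cos_diff' h i j]
    _ = N * ∑ i, (u i)^2 := by
        rw [Finset.mul_sum]
        apply Finset.sum_congr rfl; intro i _
        rw [Finset.sum_eq_single i]
        · rw [if_pos rfl]; ring
        · intro j _ hji; rw [if_neg (Ne.symm hji), mul_zero]
        · intro hi; exact absurd (Finset.mem_univ i) hi


lemma cs_abs {ι : Type*} (s : Finset ι) (f g : ι → ℝ) :
    ∑ t ∈ s, |f t| * |g t| ≤ Real.sqrt (∑ t ∈ s, (f t)^2) * Real.sqrt (∑ t ∈ s, (g t)^2) := by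
  have h := Finset.sum_mul_sq_le_sq_mul_sq s (fun t => |f t|) (fun t => |g t|)
  simp only [sq_abs] at h
  have hnn : 0 ≤ ∑ t ∈ s, |f t| * |g t| :=
    Finset.sum_nonneg fun t _ => mul_nonneg (abs_nonneg _) (abs_nonneg _)
  calc ∑ t ∈ s, |f t| * |g t| = Real.sqrt ((∑ t ∈ s, |f t| * |g t|)^2) := (Real.sqrt_sq hnn).symm
    _ ≤ Real.sqrt ((∑ t ∈ s, (f t)^2) * ∑ t ∈ s, (g t)^2) := Real.sqrt_le_sqrt h
    _ = _ := Real.sqrt_mul (Finset.sum_nonneg fun t _ => sq_nonneg _) _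

lemma two_cs {a b c d : ℝ} (ha : 0 ≤ a) (hb : 0 ≤ b) (hc : 0 ≤ c) (hd : 0 ≤ d) :
    a * c + b * d ≤ Real.sqrt (a^2 + b^2) * Real.sqrt (c^2 + d^2) := by
  rw [← Real.sqrt_mul (by positivity)]
  calc a * c + b * d = Real.sqrt ((a*c + b*d)^2) := (Real.sqrt_sq (by positivity)).symm
    _ ≤ _ := Real.sqrt_le_sqrt (by nlinarith [sq_nonneg (a*d - b*c)])

lemma bilinear {n N : ℕ} (hnN : n ≤ N) (u v : Fin n → ℝ) :
    ∑ i, ∑ j, u i * v j * kerf N (((i:ℕ):ℝ) - ((j:ℕ):ℝ))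
      ≤ π * Real.sqrt (∑ i, (u i)^2) * Real.sqrt (∑ j, (v j)^2) := by
  classical
  set Su : ℕ → ℝ := fun t => ∑ i, u i * Real.sin (((i:ℕ):ℝ) * thet N t) with hSu
  set Cu : ℕ → ℝ := fun t => ∑ i, u i * Real.cos (((i:ℕ):ℝ) * thet N t) with hCu
  set Sv : ℕ → ℝ := fun t => ∑ j, v j * Real.sin (((j:ℕ):ℝ) * thet N t) with hSv
  set Cv : ℕ → ℝ := fun t => ∑ j, v j * Real.cos (((j:ℕ):ℝ) * thet N t) with hCv
  have step1 : ∑ i, ∑ j, u i * v j * kerf N (((i:ℕ):ℝ) - ((j:ℕ):ℝ))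
      = (N:ℝ)⁻¹ * ∑ t ∈ Finset.range N,
          (π - thet N t) * (Su t * Cv t - Cu t * Sv t) := by
    set G : Fin n → Fin n → ℕ → ℝ := fun i j t => (N:ℝ)⁻¹ * ((π - thet N t)
        * ((u i * Real.sin (((i:ℕ):ℝ) * thet N t)) * (v j * Real.cos (((j:ℕ):ℝ) * thet N t))
          - (u i * Real.cos (((i:ℕ):ℝ) * thet N t)) * (v j * Real.sin (((j:ℕ):ℝ) * thet N t)))) with hG
    have hker : ∀ (i j : Fin n), u i * v j * kerf N (((i:ℕ):ℝ) - ((j:ℕ):ℝ))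
        = ∑ t ∈ Finset.range N, G i j t := by
      intro i j
      simp only [hG]
      rw [kerf, Finset.mul_sum, Finset.mul_sum]
      apply Finset.sum_congr rfl
      intro t _
      have harg : (((i:ℕ):ℝ) - ((j:ℕ):ℝ)) * thet N t
          = ((i:ℕ):ℝ) * thet N t - ((j:ℕ):ℝ) * thet N t := by ring
      rw [harg, Real.sin_sub]
      ring
    calc ∑ i, ∑ j, u i * v j * kerf N (((i:ℕ):ℝ) - ((j:ℕ):ℝ))
        = ∑ i : Fin n, ∑ j : Fin n, ∑ t ∈ Finset.range N, G i j t := by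
          exact Finset.sum_congr rfl fun i _ => Finset.sum_congr rfl fun j _ => hker i j
      _ = ∑ i : Fin n, ∑ t ∈ Finset.range N, ∑ j : Fin n, G i j t :=
          Finset.sum_congr rfl fun i _ => Finset.sum_comm
      _ = ∑ t ∈ Finset.range N, ∑ i : Fin n, ∑ j : Fin n, G i j t := Finset.sum_comm
      _ = (N:ℝ)⁻¹ * ∑ t ∈ Finset.range N,
          (π - thet N t) * (Su t * Cv t - Cu t * Sv t) := by
          rw [Finset.mul_sum]
          apply Finset.sum_congr rfl
          intro t _
          simp only [hG, ← Finset.mul_sum, Finset.sum_sub_distrib, ← Finset.sum_mul_sum,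
            hSu, hCu, hSv, hCv]
          rw [← Finset.sum_mul, ← Finset.sum_mul]
  rw [step1]
  have step2 : ∑ t ∈ Finset.range N, (π - thet N t) * (Su t * Cv t - Cu t * Sv t)
      ≤ ∑ t ∈ Finset.range N, π * (|Su t| * |Cv t| + |Cu t| * |Sv t|) := by
    apply Finset.sum_le_sum
    intro t ht
    have htN : t < N := Finset.mem_range.1 ht
    have hN0 : (0:ℝ) < N := by
      have : 0 < N := lt_of_le_of_lt (Nat.zero_le t) htN
      exact_mod_cast this
    have hθ0 : 0 ≤ thet N t := by
      rw [thet]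
      positivity
    have hθ2 : thet N t ≤ 2 * π := by
      rw [thet, div_le_iff₀ hN0]
      have : (t:ℝ) ≤ N := by exact_mod_cast htN.le
      nlinarith [Real.pi_pos]
    have hg : |π - thet N t| ≤ π := by
      rw [abs_le]
      constructor <;> nlinarith [Real.pi_pos]
    calc (π - thet N t) * (Su t * Cv t - Cu t * Sv t)
        ≤ |(π - thet N t) * (Su t * Cv t - Cu t * Sv t)| := le_abs_self _
      _ = |π - thet N t| * |Su t * Cv t - Cu t * Sv t| := abs_mul _ _
      _ ≤ π * (|Su t * Cv t| + |Cu t * Sv t|) := by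
          apply mul_le_mul hg (abs_sub _ _) (abs_nonneg _) Real.pi_pos.le
      _ = π * (|Su t| * |Cv t| + |Cu t| * |Sv t|) := by rw [abs_mul, abs_mul]
  have hub : ∑ t ∈ Finset.range N, π * (|Su t| * |Cv t| + |Cu t| * |Sv t|)
      ≤ π * ((N:ℝ) * (Real.sqrt (∑ i, (u i)^2) * Real.sqrt (∑ j, (v j)^2))) := by
    rw [← Finset.mul_sum]
    apply mul_le_mul_of_nonneg_left _ Real.pi_pos.le
    have hsplit : ∑ t ∈ Finset.range N, (|Su t| * |Cv t| + |Cu t| * |Sv t|)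
        = (∑ t ∈ Finset.range N, |Su t| * |Cv t|) + ∑ t ∈ Finset.range N, |Cu t| * |Sv t| :=
      Finset.sum_add_distrib
    rw [hsplit]
    have h1 := cs_abs (Finset.range N) Su Cv
    have h2 := cs_abs (Finset.range N) Cu Sv
    set A := Real.sqrt (∑ t ∈ Finset.range N, (Su t)^2)
    set B := Real.sqrt (∑ t ∈ Finset.range N, (Cu t)^2)
    set C := Real.sqrt (∑ t ∈ Finset.range N, (Cv t)^2)
    set D := Real.sqrt (∑ t ∈ Finset.range N, (Sv t)^2)
    have h3 : A * C + B * D ≤ Real.sqrt (A^2 + B^2) * Real.sqrt (C^2 + D^2) :=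
      two_cs (Real.sqrt_nonneg _) (Real.sqrt_nonneg _) (Real.sqrt_nonneg _) (Real.sqrt_nonneg _)
    have hA2 : A^2 + B^2 = (N:ℝ) * ∑ i, (u i)^2 := by
      rw [Real.sq_sqrt (Finset.sum_nonneg fun t _ => sq_nonneg _),
        Real.sq_sqrt (Finset.sum_nonneg fun t _ => sq_nonneg _),
        ← Finset.sum_add_distrib]
      exact parseval hnN u
    have hC2 : C^2 + D^2 = (N:ℝ) * ∑ j, (v j)^2 := by
      rw [Real.sq_sqrt (Finset.sum_nonneg fun t _ => sq_nonneg _),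
        Real.sq_sqrt (Finset.sum_nonneg fun t _ => sq_nonneg _),
        ← Finset.sum_add_distrib]
      rw [← parseval hnN v]
      apply Finset.sum_congr rfl
      intro t _
      ring
    calc (∑ t ∈ Finset.range N, |Su t| * |Cv t|) + ∑ t ∈ Finset.range N, |Cu t| * |Sv t|
        ≤ A * C + B * D := add_le_add h1 h2
      _ ≤ Real.sqrt (A^2 + B^2) * Real.sqrt (C^2 + D^2) := h3
      _ = Real.sqrt ((N:ℝ) * ∑ i, (u i)^2) * Real.sqrt ((N:ℝ) * ∑ j, (v j)^2) := by
          rw [hA2, hC2]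
      _ = (N:ℝ) * (Real.sqrt (∑ i, (u i)^2) * Real.sqrt (∑ j, (v j)^2)) := by
          rw [Real.sqrt_mul (Nat.cast_nonneg N), Real.sqrt_mul (Nat.cast_nonneg N)]
          rw [show ∀ a b c : ℝ, (a*b)*(a*c) = (a*a)*(b*c) from fun a b c => by ring]
          rw [Real.mul_self_sqrt (Nat.cast_nonneg N)]
  rcases Nat.eq_zero_or_pos N with rfl | hN
  · simp
    positivity
  have hN0 : (0:ℝ) < N := by exact_mod_cast hN
  calc (N:ℝ)⁻¹ * ∑ t ∈ Finset.range N, (π - thet N t) * (Su t * Cv t - Cu t * Sv t)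
      ≤ (N:ℝ)⁻¹ * ∑ t ∈ Finset.range N, π * (|Su t| * |Cv t| + |Cu t| * |Sv t|) :=
        mul_le_mul_of_nonneg_left step2 (by positivity)
    _ ≤ (N:ℝ)⁻¹ * (π * ((N:ℝ) * (Real.sqrt (∑ i, (u i)^2) * Real.sqrt (∑ j, (v j)^2)))) :=
        mul_le_mul_of_nonneg_left hub (by positivity)
    _ = π * Real.sqrt (∑ i, (u i)^2) * Real.sqrt (∑ j, (v j)^2) := by
        field_simp


noncomputable def Hsum (a : ℕ) : ℝ := ∑ m ∈ Finset.range (a+1), (if m = 0 then 0 else 1/(m:ℝ))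

lemma log_le_Hsum (a : ℕ) : Real.log (a+1) ≤ Hsum a := by
  induction a with
  | zero => simp [Hsum]
  | succ a ih =>
    have hstep : Real.log (a+2) - Real.log (a+1) ≤ 1/((a:ℝ)+1) := by
      rw [← Real.log_div (by positivity) (by positivity)]
      have h1 : ((a:ℝ)+2)/((a:ℝ)+1) - 1 = 1/((a:ℝ)+1) := by
        field_simp
        norm_num
      have := Real.log_le_sub_one_of_pos (x := ((a:ℝ)+2)/((a:ℝ)+1)) (by positivity)
      linarith
    have hH : Hsum (a+1) = Hsum a + 1/((a:ℝ)+1) := by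
      rw [Hsum, Finset.sum_range_succ]
      have hne : (if a+1 = 0 then (0:ℝ) else 1/(((a+1:ℕ)):ℝ)) = 1/((a:ℝ)+1) := by
        rw [if_neg (Nat.succ_ne_zero a)]
        push_cast
        ring
      rw [hne, Hsum]
    have harg : ((a:ℕ)+1+1 : ℝ) = (a:ℝ)+2 := by push_cast; ring
    push_cast
    rw [show (a:ℝ)+1+1 = (a:ℝ)+2 by ring]
    push_cast at ih
    linarith
  
lemma sum_log_ge (n : ℕ) (hn : 1 ≤ n) :
    (n:ℝ) * Real.log n - n + 1 ≤ ∑ i ∈ Finset.range n, Real.log (i+1) := by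
  induction n, hn using Nat.le_induction with
  | base => simp
  | succ n hn ih =>
    rw [Finset.sum_range_succ]
    have hn' : (1:ℝ) ≤ n := by exact_mod_cast hn
    have hstep : (n:ℝ) * (Real.log ((n:ℝ)+1) - Real.log n) ≤ 1 := by
      have hld : Real.log ((n:ℝ)+1) - Real.log n = Real.log (((n:ℝ)+1)/(n:ℝ)) :=
        (Real.log_div (by positivity) (by positivity)).symm
      rw [hld]
      have h1 : ((n:ℝ)+1)/(n:ℝ) - 1 = 1/(n:ℝ) := by field_simp; ring
      have h2 := Real.log_le_sub_one_of_pos (x := ((n:ℝ)+1)/(n:ℝ)) (by positivity)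
      have h3 : Real.log (((n:ℝ)+1)/(n:ℝ)) ≤ 1/(n:ℝ) := by linarith
      have h4 := mul_le_mul_of_nonneg_left h3 (by positivity : (0:ℝ) ≤ (n:ℝ))
      have h5 : (n:ℝ) * (1/(n:ℝ)) = 1 := by field_simp
      linarith
    push_cast
    push_cast at ih
    nlinarith [ih, hstep]

lemma sum_range_cast (a : ℕ) : ∑ m ∈ Finset.range (a+1), (m:ℝ) = a*(a+1)/2 := by
  induction a with
  | zero => simp
  | succ a ih =>
    rw [Finset.sum_range_succ, ih]
    push_cast
    ring

set_option maxHeartbeats 1000000 in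
lemma AK_lower {n : ℕ} (hn : 2 ≤ n) :
    (1/16:ℝ) * n * Real.log n
      ≤ ∑ i : Fin n, ∑ j : Fin n, Aprefix n i j * kerf (4*n^2) (((i:ℕ):ℝ) - ((j:ℕ):ℝ)) := by
  set N := 4*n^2 with hNdef
  have hNn : (N:ℝ) = 4*(n:ℝ)^2 := by rw [hNdef]; push_cast; ring
  have hn' : (2:ℝ) ≤ n := by exact_mod_cast hn
  -- row computation
  have hrow : ∀ i : Fin n, ∑ j : Fin n, Aprefix n i j * kerf N (((i:ℕ):ℝ) - ((j:ℕ):ℝ))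
      = ∑ m ∈ Finset.range ((i:ℕ)+1), kerf N (m:ℝ) := by
    intro i
    have h1 : ∀ j : Fin n, Aprefix n i j * kerf N (((i:ℕ):ℝ) - ((j:ℕ):ℝ))
        = (fun jn : ℕ => if jn ≤ (i:ℕ) then kerf N (((i:ℕ):ℝ) - (jn:ℝ)) else 0) ((j:ℕ)) := by
      intro j
      simp only [Aprefix]
      by_cases h : j ≤ i
      · rw [if_pos h, if_pos (Fin.le_def.mp h), one_mul]
      · rw [if_neg h, if_neg (fun hh => h (Fin.le_def.mpr hh)), zero_mul]
    calc ∑ j : Fin n, Aprefix n i j * kerf N (((i:ℕ):ℝ) - ((j:ℕ):ℝ))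
        = ∑ j : Fin n, (fun jn : ℕ =>
            if jn ≤ (i:ℕ) then kerf N (((i:ℕ):ℝ) - (jn:ℝ)) else 0) ((j:ℕ)) :=
          Finset.sum_congr rfl fun j _ => h1 j
      _ = ∑ jn ∈ Finset.range n,
            (if jn ≤ (i:ℕ) then kerf N (((i:ℕ):ℝ) - (jn:ℝ)) else 0) :=
          Fin.sum_univ_eq_sum_range
            (fun jn : ℕ => if jn ≤ (i:ℕ) then kerf N (((i:ℕ):ℝ) - (jn:ℝ)) else 0) n
      _ = ∑ jn ∈ Finset.range ((i:ℕ)+1),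
            (if jn ≤ (i:ℕ) then kerf N (((i:ℕ):ℝ) - (jn:ℝ)) else 0) := by
          refine (Finset.sum_subset (Finset.range_subset_range.mpr (by omega)) ?_).symm
          intro x hx hnx
          rw [Finset.mem_range] at hx hnx
          rw [if_neg (by omega)]
      _ = ∑ jn ∈ Finset.range ((i:ℕ)+1), kerf N (((i:ℕ):ℝ) - (jn:ℝ)) := by
          apply Finset.sum_congr rfl
          intro jn hjn
          rw [Finset.mem_range] at hjn
          rw [if_pos (by omega)]
      _ = ∑ jn ∈ Finset.range ((i:ℕ)+1), (fun m : ℕ => kerf N (m:ℝ)) ((i:ℕ)+1-1-jn) := by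
          apply Finset.sum_congr rfl
          intro jn hjn
          rw [Finset.mem_range] at hjn
          simp only
          congr 1
          rw [show (i:ℕ)+1-1-jn = (i:ℕ) - jn from by omega, Nat.cast_sub (by omega)]
      _ = ∑ m ∈ Finset.range ((i:ℕ)+1), kerf N (m:ℝ) :=
          Finset.sum_range_reflect (fun m : ℕ => kerf N (m:ℝ)) ((i:ℕ)+1)
  -- error bound per row
  set E : ℝ := π^2/(N:ℝ)^2 * ((n:ℝ)^2/2) with hE
  have hrowlb : ∀ a ∈ Finset.range n, Hsum a - E ≤ ∑ m ∈ Finset.range (a+1), kerf N (m:ℝ) := by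
    intro a ha
    rw [Finset.mem_range] at ha
    have hterm : ∀ m ∈ Finset.range (a+1),
        (if m = 0 then (0:ℝ) else 1/(m:ℝ)) - π^2*(m:ℝ)/(N:ℝ)^2 ≤ kerf N (m:ℝ) := by
      intro m hm
      rw [Finset.mem_range] at hm
      rcases Nat.eq_zero_or_pos m with rfl | hm0
      · simp [kerf_zero]
      · have h2m : 2*m < N := by
          have h1 : 2*m < 2*n := by omega
          have h2 : 2*n ≤ 4*n^2 := by
            have := Nat.le_self_pow (by norm_num : 2 ≠ 0) n
            omega
          omega
        have := kerf_ge hm0 h2m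
        rw [if_neg hm0.ne']
        exact this
    have hsum1 : ∑ m ∈ Finset.range (a+1),
        ((if m = 0 then (0:ℝ) else 1/(m:ℝ)) - π^2*(m:ℝ)/(N:ℝ)^2)
        = Hsum a - π^2/(N:ℝ)^2 * ((a:ℝ)*((a:ℝ)+1)/2) := by
      rw [Finset.sum_sub_distrib]
      congr 1
      have : ∀ m : ℕ, π^2*(m:ℝ)/(N:ℝ)^2 = π^2/(N:ℝ)^2 * (m:ℝ) := by
        intro m; ring
      rw [Finset.sum_congr rfl (fun m _ => this m), ← Finset.mul_sum, sum_range_cast]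
    have herr : π^2/(N:ℝ)^2 * ((a:ℝ)*((a:ℝ)+1)/2) ≤ E := by
      rw [hE]
      apply mul_le_mul_of_nonneg_left _ (by positivity)
      have ha' : (a:ℝ) ≤ (n:ℝ) - 1 := by
        have : (a:ℝ) + 1 ≤ n := by exact_mod_cast ha
        linarith
      nlinarith
    calc Hsum a - E ≤ Hsum a - π^2/(N:ℝ)^2 * ((a:ℝ)*((a:ℝ)+1)/2) := by linarith
      _ = ∑ m ∈ Finset.range (a+1),
          ((if m = 0 then (0:ℝ) else 1/(m:ℝ)) - π^2*(m:ℝ)/(N:ℝ)^2) := hsum1.symm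
      _ ≤ ∑ m ∈ Finset.range (a+1), kerf N (m:ℝ) := Finset.sum_le_sum hterm
  have htotal : ∑ a ∈ Finset.range n, Hsum a - (n:ℝ)*E
      ≤ ∑ i : Fin n, ∑ j : Fin n, Aprefix n i j * kerf N (((i:ℕ):ℝ) - ((j:ℕ):ℝ)) := by
    rw [Finset.sum_congr rfl (fun i _ => hrow i),
      Fin.sum_univ_eq_sum_range (fun a => ∑ m ∈ Finset.range (a+1), kerf N (m:ℝ)) n]
    have := Finset.sum_le_sum hrowlb
    rw [Finset.sum_sub_distrib] at this
    simp only [Finset.sum_const, Finset.card_range, nsmul_eq_mul] at this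
    linarith
  -- harmonic sums vs log
  have hH : ∑ a ∈ Finset.range n, Real.log ((a:ℝ)+1) ≤ ∑ a ∈ Finset.range n, Hsum a := by
    apply Finset.sum_le_sum
    intro a _
    have := log_le_Hsum a
    push_cast at this ⊢
    exact this
  have hlogfact := sum_log_ge n (by omega)
  have hsum_logs : (n:ℝ) * Real.log n - n + 1 ≤ ∑ a ∈ Finset.range n, Hsum a := by
    refine le_trans ?_ hH
    refine le_trans hlogfact ?_
    apply le_of_eq
    apply Finset.sum_congr rfl
    intro a _
    push_cast
    ring
  -- error is at most 1/6
  have hEtot : (n:ℝ)*E ≤ 1/6 := by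
    rw [hE, hNn]
    have hpi : π ≤ 3.15 := by linarith [Real.pi_lt_d2]
    have hpi0 : 0 < π := Real.pi_pos
    have h1 : π^2/(4*(n:ℝ)^2)^2 * ((n:ℝ)^2/2) = π^2/(32*(n:ℝ)^2) := by
      field_simp
      ring
    rw [h1]
    have hn0 : (0:ℝ) < n := by linarith
    have h2 : (n:ℝ) * (π^2/(32*(n:ℝ)^2)) = π^2/(32*(n:ℝ)) := by
      field_simp
    rw [h2, div_le_iff₀ (by positivity)]
    nlinarith
  -- final numeric comparison
  have hlog2 : (0.6931:ℝ) < Real.log 2 := by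
    have := Real.log_two_gt_d9
    linarith
  have hfin : (1/16:ℝ) * n * Real.log n ≤ (n:ℝ) * Real.log n - n + 1 - 1/6 := by
    have hmain : (n:ℝ) - 5/6 ≤ (15/16) * ((n:ℝ) * Real.log n) := by
      rcases eq_or_lt_of_le hn with h2 | h2
      · -- n = 2
        rw [← h2]
        push_cast
        nlinarith
      · rcases eq_or_lt_of_le (by omega : 3 ≤ n) with h3 | h3
        · -- n = 3
          rw [← h3]
          push_cast
          have he : Real.exp 1 ≤ 3 := by
            have := Real.exp_one_lt_d9
            linarith
          have hlog3 : (1:ℝ) ≤ Real.log 3 := by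
            have := Real.log_le_log (Real.exp_pos 1) he
            rwa [Real.log_exp] at this
          nlinarith
        · -- n ≥ 4
          have h4 : (4:ℝ) ≤ n := by exact_mod_cast h3
          have hlog4 : Real.log 4 ≤ Real.log n := Real.log_le_log (by norm_num) h4
          have h4eq : Real.log 4 = 2 * Real.log 2 := by
            rw [show (4:ℝ) = 2^2 by norm_num, Real.log_pow]
            push_cast
            ring
          have hlogn : (1.38:ℝ) ≤ Real.log n := by
            rw [h4eq] at hlog4
            linarith
          nlinarith [mul_le_mul_of_nonneg_left hlogn (by linarith : (0:ℝ) ≤ (15/16)*(n:ℝ) - (15/16)*0)]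
    linarith
  linarith [htotal, hsum_logs, hEtot, hfin]


lemma sqrt_cs {ι : Type*} (s : Finset ι) (a b : ι → ℝ)
    (ha : ∀ t ∈ s, 0 ≤ a t) (hb : ∀ t ∈ s, 0 ≤ b t) :
    ∑ t ∈ s, Real.sqrt (a t) * Real.sqrt (b t)
      ≤ Real.sqrt (∑ t ∈ s, a t) * Real.sqrt (∑ t ∈ s, b t) := by
  have h := cs_abs s (fun t => Real.sqrt (a t)) (fun t => Real.sqrt (b t))
  simp only [abs_of_nonneg (Real.sqrt_nonneg _)] at h
  refine h.trans (le_of_eq ?_)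
  rw [Finset.sum_congr rfl (fun t ht => Real.sq_sqrt (ha t ht)),
    Finset.sum_congr rfl (fun t ht => Real.sq_sqrt (hb t ht))]


end PrefixLB

open PrefixLB

-- STATEMENT 10: γ_{(p)}(A_prefix) ≳ n^{1/p} log n.
open Finset Real in
set_option maxHeartbeats 2000000 in
/-- γ_{(p)}(A_prefix) ≳ n^{1/p} log n. -/
theorem gammaP_prefix_lower_bound :
    ∃ c : ℝ, 0 < c ∧ ∀ n : ℕ, 2 ≤ n → ∀ p : ℝ, 2 ≤ p →
      gammaP p (Aprefix n) ≥ c * (n : ℝ) ^ ((1 : ℝ) / p) * Real.log n := by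
  refine ⟨(16*π)⁻¹, by positivity, ?_⟩
  intro n hn p hp
  have hn0 : (0:ℝ) < n := by positivity
  have hn2 : (2:ℝ) ≤ n := by exact_mod_cast hn
  have hp0 : (0:ℝ) < p := by linarith
  have hlogn : 0 ≤ Real.log n := Real.log_nonneg (by linarith)
  rw [ge_iff_le, gammaP]
  apply le_csInf
  · exact ⟨_, n, Aprefix n, 1, Matrix.mul_one _, rfl⟩
  rintro b ⟨k, L, R, hLR, rfl⟩
  set N := 4*n^2 with hNdef
  have hnN : n ≤ N := by
    have := Nat.le_self_pow (by norm_num : 2 ≠ 0) n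
    omega
  set FLsq : ℝ := ∑ i, ∑ s, (L i s)^2 with hFLsq
  set FRsq : ℝ := ∑ s, ∑ j, (R s j)^2 with hFRsq
  have hFLsq0 : 0 ≤ FLsq := Finset.sum_nonneg fun i _ => Finset.sum_nonneg fun s _ => sq_nonneg _
  have hFRsq0 : 0 ≤ FRsq := Finset.sum_nonneg fun s _ => Finset.sum_nonneg fun j _ => sq_nonneg _
  set FL := Real.sqrt FLsq with hFL
  set FR := Real.sqrt FRsq with hFR
  set IP : ℝ := ∑ i : Fin n, ∑ j : Fin n, Aprefix n i j * kerf N (((i:ℕ):ℝ) - ((j:ℕ):ℝ)) with hIP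
  -- Step A : IP ≤ π * FL * FR
  have stepA : IP ≤ π * (FL * FR) := by
    have h1 : IP = ∑ s : Fin k, ∑ i : Fin n, ∑ j : Fin n,
        (L i s) * (R s j) * kerf N (((i:ℕ):ℝ) - ((j:ℕ):ℝ)) := by
      rw [hIP, ← hLR]
      calc ∑ i : Fin n, ∑ j : Fin n, (L * R) i j * kerf N (((i:ℕ):ℝ) - ((j:ℕ):ℝ))
          = ∑ i : Fin n, ∑ j : Fin n, ∑ s : Fin k,
              (L i s) * (R s j) * kerf N (((i:ℕ):ℝ) - ((j:ℕ):ℝ)) := by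
            apply Finset.sum_congr rfl; intro i _
            apply Finset.sum_congr rfl; intro j _
            rw [Matrix.mul_apply, Finset.sum_mul]
        _ = ∑ i : Fin n, ∑ s : Fin k, ∑ j : Fin n,
              (L i s) * (R s j) * kerf N (((i:ℕ):ℝ) - ((j:ℕ):ℝ)) :=
            Finset.sum_congr rfl fun i _ => Finset.sum_comm
        _ = ∑ s : Fin k, ∑ i : Fin n, ∑ j : Fin n,
              (L i s) * (R s j) * kerf N (((i:ℕ):ℝ) - ((j:ℕ):ℝ)) := Finset.sum_comm
    rw [h1]
    have h2 : ∀ s : Fin k, ∑ i : Fin n, ∑ j : Fin n,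
        (L i s) * (R s j) * kerf N (((i:ℕ):ℝ) - ((j:ℕ):ℝ))
        ≤ π * (Real.sqrt (∑ i, (L i s)^2) * Real.sqrt (∑ j, (R s j)^2)) := by
      intro s
      have := bilinear hnN (fun i => L i s) (fun j => R s j)
      calc ∑ i : Fin n, ∑ j : Fin n, (L i s) * (R s j) * kerf N (((i:ℕ):ℝ) - ((j:ℕ):ℝ))
          ≤ π * Real.sqrt (∑ i, (L i s)^2) * Real.sqrt (∑ j, (R s j)^2) := this
        _ = π * (Real.sqrt (∑ i, (L i s)^2) * Real.sqrt (∑ j, (R s j)^2)) := by ring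
    calc ∑ s : Fin k, ∑ i : Fin n, ∑ j : Fin n,
          (L i s) * (R s j) * kerf N (((i:ℕ):ℝ) - ((j:ℕ):ℝ))
        ≤ ∑ s : Fin k, π * (Real.sqrt (∑ i, (L i s)^2) * Real.sqrt (∑ j, (R s j)^2)) :=
          Finset.sum_le_sum fun s _ => h2 s
      _ = π * ∑ s : Fin k, Real.sqrt (∑ i, (L i s)^2) * Real.sqrt (∑ j, (R s j)^2) := by
          rw [Finset.mul_sum]
      _ ≤ π * (Real.sqrt (∑ s : Fin k, ∑ i, (L i s)^2)
            * Real.sqrt (∑ s : Fin k, ∑ j, (R s j)^2)) := by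
          apply mul_le_mul_of_nonneg_left _ Real.pi_pos.le
          exact sqrt_cs Finset.univ _ _
            (fun s _ => Finset.sum_nonneg fun i _ => sq_nonneg _)
            (fun s _ => Finset.sum_nonneg fun j _ => sq_nonneg _)
      _ = π * (FL * FR) := by
          rw [hFL, hFR, hFLsq, hFRsq, Finset.sum_comm (f := fun s i => (L i s)^2)]
  -- Step C : FR ≤ √n * norm12 R
  have hbdd : BddAbove (Set.range fun j : Fin n => Real.sqrt (∑ i, (R i j)^2)) :=
    Set.Finite.bddAbove (Set.finite_range _)
  have hcol : ∀ j : Fin n, Real.sqrt (∑ i, (R i j)^2) ≤ norm12 R := by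
    intro j
    exact le_ciSup hbdd j
  have hnorm0 : 0 ≤ norm12 R := by
    have j0 : Fin n := ⟨0, by omega⟩
    exact (Real.sqrt_nonneg _).trans (hcol j0)
  have stepC : FR ≤ Real.sqrt n * norm12 R := by
    have h1 : FRsq ≤ (n:ℝ) * (norm12 R)^2 := by
      rw [hFRsq, Finset.sum_comm]
      calc ∑ j : Fin n, ∑ s : Fin k, (R s j)^2
          ≤ ∑ j : Fin n, (norm12 R)^2 := by
            apply Finset.sum_le_sum
            intro j _
            have h2 := hcol j
            have h3 : ∑ s : Fin k, (R s j)^2 = (Real.sqrt (∑ s, (R s j)^2))^2 :=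
              (Real.sq_sqrt (Finset.sum_nonneg fun s _ => sq_nonneg _)).symm
            rw [h3]
            exact pow_le_pow_left₀ (Real.sqrt_nonneg _) h2 2
        _ = (n:ℝ) * (norm12 R)^2 := by
            rw [Finset.sum_const, Finset.card_univ, Fintype.card_fin, nsmul_eq_mul]
    calc FR ≤ Real.sqrt ((n:ℝ) * (norm12 R)^2) := Real.sqrt_le_sqrt h1
      _ = Real.sqrt n * norm12 R := by
        rw [Real.sqrt_mul (by positivity), Real.sqrt_sq hnorm0]
  -- Step D : n^(1/p-1/2) * FL ≤ √(trq (p/2) (L*Lᵀ))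
  set q : ℝ := p/2 with hq
  have hq1 : 1 ≤ q := by rw [hq]; linarith
  have hq0 : 0 < q := by linarith
  have hdiag : ∀ i, (L * Lᵀ) i i = ∑ s, (L i s)^2 := by
    intro i
    rw [Matrix.mul_apply]
    apply Finset.sum_congr rfl
    intro s _
    rw [Matrix.transpose_apply, sq]
  have stepD : (n:ℝ) ^ ((1:ℝ)/p - 1/2) * FL ≤ Real.sqrt (trq q (L * Lᵀ)) := by
    set d : Fin n → ℝ := fun i => ∑ s, (L i s)^2 with hd
    have hd0 : ∀ i, 0 ≤ d i := fun i => Finset.sum_nonneg fun s _ => sq_nonneg _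
    have hmean := Real.rpow_arith_mean_le_arith_mean_rpow Finset.univ
      (fun _ : Fin n => 1/(n:ℝ)) d (fun i _ => by positivity) (by
        rw [Finset.sum_const, Finset.card_univ, Fintype.card_fin, nsmul_eq_mul]
        field_simp) (fun i _ => hd0 i) hq1
    have hsum1 : ∑ i : Fin n, 1/(n:ℝ) * d i = (1/(n:ℝ)) * FLsq := by
      rw [← Finset.mul_sum, hFLsq]
    have hsum2 : ∑ i : Fin n, 1/(n:ℝ) * (d i) ^ q = (1/(n:ℝ)) * ∑ i, (d i) ^ q := by
      rw [← Finset.mul_sum]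
    rw [hsum1, hsum2] at hmean
    -- (1/n * FLsq)^q ≤ 1/n * ∑ d^q
    have hkey : (n:ℝ) ^ ((1:ℝ) - q) * FLsq ^ q ≤ ∑ i, (d i) ^ q := by
      have h1 : ((1/(n:ℝ)) * FLsq) ^ q = (n:ℝ) ^ (-q) * FLsq ^ q := by
        rw [Real.mul_rpow (by positivity) hFLsq0, one_div, Real.inv_rpow hn0.le,
          ← Real.rpow_neg hn0.le]
      rw [h1] at hmean
      have h2 := mul_le_mul_of_nonneg_left hmean (le_of_lt hn0)
      have h3 : (n:ℝ) * ((1/(n:ℝ)) * ∑ i, (d i) ^ q) = ∑ i, (d i) ^ q := by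
        field_simp
      rw [h3] at h2
      calc (n:ℝ) ^ ((1:ℝ) - q) * FLsq ^ q
          = (n:ℝ) * ((n:ℝ) ^ (-q) * FLsq ^ q) := by
            rw [← mul_assoc]
            congr 1
            rw [show ((1:ℝ) - q) = 1 + (-q) by ring, Real.rpow_add hn0, Real.rpow_one]
        _ ≤ ∑ i, (d i) ^ q := h2
    have htrq : trq q (L * Lᵀ) = (∑ i, (d i) ^ q) ^ ((1:ℝ)/q) := by
      rw [trq]
      congr 1
      apply Finset.sum_congr rfl
      intro i _
      rw [hdiag i]
    have hmono : ((n:ℝ) ^ ((1:ℝ) - q) * FLsq ^ q) ^ ((1:ℝ)/q)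
        ≤ (∑ i, (d i) ^ q) ^ ((1:ℝ)/q) :=
      Real.rpow_le_rpow (by positivity) hkey (by positivity)
    have hlhs : ((n:ℝ) ^ ((1:ℝ) - q) * FLsq ^ q) ^ ((1:ℝ)/q)
        = (n:ℝ) ^ (((1:ℝ) - q)/q) * FLsq := by
      rw [Real.mul_rpow (by positivity) (by positivity),
        ← Real.rpow_mul hn0.le, ← Real.rpow_mul hFLsq0]
      rw [show q * ((1:ℝ)/q) = 1 by field_simp, Real.rpow_one]
      congr 1
      field_simp
    have hsq : (n:ℝ) ^ ((1:ℝ)/p - 1/2) * FL ≤ Real.sqrt ((n:ℝ) ^ (((1:ℝ) - q)/q) * FLsq) := by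
      rw [Real.sqrt_mul (by positivity), hFL]
      apply mul_le_mul_of_nonneg_right _ (Real.sqrt_nonneg _)
      apply le_of_eq
      rw [Real.sqrt_eq_rpow, ← Real.rpow_mul hn0.le]
      congr 1
      rw [hq]
      field_simp
      try ring
    calc (n:ℝ) ^ ((1:ℝ)/p - 1/2) * FL
        ≤ Real.sqrt ((n:ℝ) ^ (((1:ℝ) - q)/q) * FLsq) := hsq
      _ ≤ Real.sqrt ((∑ i, (d i) ^ q) ^ ((1:ℝ)/q)) := by
          apply Real.sqrt_le_sqrt
          rw [← hlhs]
          exact hmono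
      _ = Real.sqrt (trq q (L * Lᵀ)) := by rw [htrq]
  -- Step B
  have stepB : (1/16:ℝ) * n * Real.log n ≤ IP := AK_lower hn
  -- Combine
  have hFL0 : 0 ≤ FL := Real.sqrt_nonneg _
  have hFR0 : 0 ≤ FR := Real.sqrt_nonneg _
  have hsqrtn : (0:ℝ) < Real.sqrt n := Real.sqrt_pos.mpr hn0
  have htrq0 : 0 ≤ Real.sqrt (trq q (L * Lᵀ)) := Real.sqrt_nonneg _
  have hxpos : 0 ≤ (n:ℝ) ^ ((1:ℝ)/p - 1/2) * FL := by positivity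
  have hy : FR / Real.sqrt n ≤ norm12 R := by
    rw [div_le_iff₀ hsqrtn]
    calc FR ≤ Real.sqrt n * norm12 R := stepC
      _ = norm12 R * Real.sqrt n := by ring
  have hy0 : 0 ≤ FR / Real.sqrt n := by positivity
  have hmul : ((n:ℝ) ^ ((1:ℝ)/p - 1/2) * FL) * (FR / Real.sqrt n)
      ≤ Real.sqrt (trq q (L * Lᵀ)) * norm12 R :=
    mul_le_mul stepD hy hy0 htrq0
  have hiden : ((n:ℝ) ^ ((1:ℝ)/p - 1/2) * FL) * (FR / Real.sqrt n)
      = (n:ℝ) ^ ((1:ℝ)/p - 1) * (FL * FR) := by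
    have hsplit : (n:ℝ) ^ ((1:ℝ)/p - 1/2) = (n:ℝ) ^ ((1:ℝ)/p - 1) * (n:ℝ) ^ ((1:ℝ)/2) := by
      rw [← Real.rpow_add hn0]
      congr 1
      ring
    rw [hsplit, Real.sqrt_eq_rpow]
    have hne : (n:ℝ) ^ ((1:ℝ)/2) ≠ 0 := by positivity
    field_simp
  have hIPpos : FL * FR ≥ IP / π := by
    rw [ge_iff_le, div_le_iff₀ Real.pi_pos]
    calc IP ≤ π * (FL * FR) := stepA
      _ = FL * FR * π := by ring
  have hfinal : (16*π)⁻¹ * (n:ℝ) ^ ((1:ℝ)/p) * Real.log n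
      ≤ (n:ℝ) ^ ((1:ℝ)/p - 1) * (FL * FR) := by
    have h1 : (n:ℝ) ^ ((1:ℝ)/p - 1) * (IP / π) ≤ (n:ℝ) ^ ((1:ℝ)/p - 1) * (FL * FR) :=
      mul_le_mul_of_nonneg_left hIPpos (by positivity)
    refine le_trans ?_ h1
    have h2 : (1/16:ℝ) * n * Real.log n / π ≤ IP / π :=
      (div_le_div_iff_of_pos_right Real.pi_pos).mpr stepB
    have h3 : (16*π)⁻¹ * (n:ℝ)^((1:ℝ)/p) * Real.log n
        = (n:ℝ)^((1:ℝ)/p - 1) * ((1/16:ℝ) * n * Real.log n / π) := by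
      rw [show ((1:ℝ)/p - 1) = 1/p + (-1) by ring, Real.rpow_add hn0, Real.rpow_neg_one]
      field_simp
    rw [h3]
    exact mul_le_mul_of_nonneg_left h2 (by positivity)
  calc (16*π)⁻¹ * (n:ℝ) ^ ((1:ℝ)/p) * Real.log n
      ≤ (n:ℝ) ^ ((1:ℝ)/p - 1) * (FL * FR) := hfinal
    _ ≤ Real.sqrt (trq q (L * Lᵀ)) * norm12 R := by rw [← hiden]; exact hmul
    _ = Real.sqrt (trq (p/2) (L * Lᵀ)) * norm12 R := by rw [hq]
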